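/- Let p be a prime and n a positive integer. If A is a subset of (ℤ/pℤ)^n such that there do not exist p elements v_1, ..., v_p of A (with repetition allowed, but not all equal) satisfying v_1 + ... + v_p = 0, then |A| ≤ p · C(⌊n(2p-1)/p⌋, n). -/

import Mathlib

open Finset

section Slice

variable {K : Type} [Field K] {σ : Type} [Fintype σ] [DecidableEq σ]

/-- `g` does not depend on coordinate `j`. -/
def IndepCoord {k : ℕ} (j : Fin k) (g : (Fin k → σ) → K) : Prop :=
  ∀ x y : Fin k → σ, (∀ i, i ≠ j → x i = y i) → g x = g y

/-- the tensor `T` has slice rank at most `r`. -/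
def SlicesLE (k : ℕ) (T : (Fin k → σ) → K) (r : ℕ) : Prop :=
  ∃ (ι : Type) (_i : Fintype ι) (j : ι → Fin k) (f : ι → σ → K) (g : ι → (Fin k → σ) → K),
    Fintype.card ι ≤ r ∧ (∀ s, IndepCoord (j s) (g s)) ∧
      ∀ x, T x = ∑ s ∈ (@Finset.univ ι _i), f s (x (j s)) * g s x

variable [Fintype K] [DecidableEq K]

/-- A finite-dimensional subspace of functions contains an element whose support has size
at least the dimension. -/
lemma exists_mem_finrank_le_support {α : Type} [Fintype α] [DecidableEq α]
    (W : Submodule K (α → K)) :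
    ∃ h ∈ W, Module.finrank K ↥W ≤ #(univ.filter fun a => h a ≠ 0) := by
  classical
  haveI : Fintype ↥W := Fintype.ofFinite ↥W
  obtain ⟨h, -, hmax⟩ := Finset.exists_max_image (Finset.univ : Finset ↥W)
    (fun h : ↥W => #(univ.filter fun a => (h : α → K) a ≠ 0)) ⟨0, mem_univ _⟩
  refine ⟨h, h.2, ?_⟩
  set s : Finset α := univ.filter fun a => (h : α → K) a ≠ 0 with hs
  let ρ : ↥W →ₗ[K] (↥s → K) := (LinearMap.funLeft K K (Subtype.val)).comp W.subtype
  have hinj : Function.Injective ρ := by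
    rw [injective_iff_map_eq_zero]
    intro w hw0
    by_contra hw
    have hvan : ∀ a ∈ s, (w : α → K) a = 0 := fun a ha => congrFun hw0 ⟨a, ha⟩
    have hwne : (w : α → K) ≠ 0 := by
      intro hc; exact hw (Subtype.ext hc)
    obtain ⟨a0, ha0⟩ := Function.ne_iff.1 hwne
    have ha0s : a0 ∉ s := fun hc => ha0 (hvan a0 hc)
    have hsub : insert a0 s ⊆ univ.filter fun a => ((h + w : ↥W) : α → K) a ≠ 0 := by
      intro a ha
      rcases Finset.mem_insert.1 ha with rfl | ha
      · simp only [mem_filter, mem_univ, true_and]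
        have : (h : α → K) a = 0 := by
          by_contra hc
          exact ha0s (by simp [hs, hc])
        simpa [this] using ha0
      · simp only [mem_filter, mem_univ, true_and]
        have hw0' : (w : α → K) a = 0 := hvan a ha
        have : (h : α → K) a ≠ 0 := by
          simp only [hs, mem_filter] at ha; exact ha.2
        simpa [hw0'] using this
    have hlt : #s < #(univ.filter fun a => ((h + w : ↥W) : α → K) a ≠ 0) := by
      calc #s < #(insert a0 s) := by rw [Finset.card_insert_of_notMem ha0s]; omega
        _ ≤ _ := Finset.card_le_card hsub
    exact absurd (hmax (h + w) (mem_univ _)) (by push_neg; exact hlt)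
  have h1 := LinearMap.finrank_le_finrank_of_injective hinj
  rw [Module.finrank_pi, Fintype.card_coe] at h1
  exact h1

/-- Base case of Tao's diagonal slice-rank lemma: order-2 tensors. -/
lemma tao_base (T : (Fin 2 → σ) → K) (A : Finset σ) (r : ℕ)
    (hdiag : ∀ a ∈ A, T (fun _ => a) ≠ 0)
    (hoff : ∀ x : Fin 2 → σ, (∀ i, x i ∈ A) → ¬(∀ i i', x i = x i') → T x = 0)
    (hT : SlicesLE 2 T r) : A.card ≤ r := by
  classical
  obtain ⟨ι, _i, j, f, g, hcard, hind, hsum⟩ := hT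
  set rows : ↥A → (↥A → K) := fun a b => T ![a.1, b.1] with hrows
  have htwo : ∀ t : Fin 2, t = 0 ∨ t = 1 := by decide
  let u : ι → (↥A → K) := fun s =>
    if j s = 0 then (fun b => g s ![b.1, b.1]) else (fun b => f s b.1)
  let c : ↥A → ι → K := fun a s =>
    if j s = 0 then f s a.1 else g s ![a.1, a.1]
  have hrow_mem : ∀ a : ↥A, rows a = ∑ s, c a s • u s := by
    intro a
    funext b
    rw [hrows]
    simp only [Finset.sum_apply, Pi.smul_apply, smul_eq_mul]
    rw [hsum ![a.1, b.1]]
    refine Finset.sum_congr rfl fun s _ => ?_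
    rcases htwo (j s) with hjs | hjs
    · have hg : g s ![a.1, b.1] = g s ![b.1, b.1] := by
        apply hind s
        intro i hi
        rcases htwo i with rfl | rfl
        · exact absurd hjs.symm hi
        · simp
      simp [c, u, hjs, hg]
    · have hg : g s ![a.1, b.1] = g s ![a.1, a.1] := by
        apply hind s
        intro i hi
        rcases htwo i with rfl | rfl
        · simp
        · exact absurd hjs.symm hi
      simp [c, u, hjs, hg, mul_comm]
  -- rows are linearly independent
  have hli : LinearIndependent K rows := by
    rw [Fintype.linearIndependent_iff]
    intro w hw b
    have hb := congrFun hw b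
    simp only [Finset.sum_apply, Pi.smul_apply, smul_eq_mul, Pi.zero_apply] at hb
    have hsingle : ∀ a : ↥A, a ≠ b → w a * rows a b = 0 := by
      intro a hab
      have : rows a b = 0 := by
        apply hoff
        · intro i; rcases htwo i with rfl | rfl <;> simp [a.2, b.2]
        · intro hc
          have := hc 0 1
          simp only [Matrix.cons_val_zero, Matrix.cons_val_one, Matrix.head_cons] at this
          exact hab (Subtype.ext this)
      rw [this, mul_zero]
    rw [Finset.sum_eq_single b (fun a _ hab => hsingle a hab) (by simp)] at hb
    have hTb : rows b b ≠ 0 := by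
      have : (![b.1, b.1] : Fin 2 → σ) = fun _ => b.1 := by
        funext i; rcases htwo i with rfl | rfl <;> simp
      rw [hrows]; simp only []
      rw [this]
      exact hdiag b.1 b.2
    exact (mul_eq_zero.1 hb).resolve_right hTb
  -- rows lie in the span of the u's
  set W : Submodule K (↥A → K) := Submodule.span K (Set.range u) with hW
  have hmem : ∀ a : ↥A, rows a ∈ W := by
    intro a
    rw [hrow_mem a]
    exact Submodule.sum_mem _ fun s _ =>
      Submodule.smul_mem _ _ (Submodule.subset_span (Set.mem_range_self s))
  have hfr : Module.finrank K ↥W ≤ Fintype.card ι := by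
    refine le_trans (finrank_span_le_card _) ?_
    rw [Set.toFinset_range]
    exact le_trans (Finset.card_image_le) (by simp)
  let rows' : ↥A → ↥W := fun a => ⟨rows a, hmem a⟩
  have hli' : LinearIndependent K rows' := by
    have : rows = (W.subtype) ∘ rows' := rfl
    exact LinearIndependent.of_comp W.subtype (this ▸ hli)
  have := hli'.fintype_card_le_finrank
  rw [Fintype.card_coe] at this
  exact le_trans (le_trans this hfr) hcard

/-- Tao's diagonal slice-rank lemma. -/
lemma tao_diag : ∀ (k : ℕ) (T : (Fin (k + 2) → σ) → K) (A : Finset σ) (r : ℕ),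
    (∀ a ∈ A, T (fun _ => a) ≠ 0) →
    (∀ x : Fin (k + 2) → σ, (∀ i, x i ∈ A) → ¬(∀ i i', x i = x i') → T x = 0) →
    SlicesLE (k + 2) T r → A.card ≤ r := by
  intro k
  induction k with
  | zero => exact fun T A r h1 h2 h3 => tao_base T A r h1 h2 h3
  | succ k ih =>
    intro T A r hdiag hoff hT
    classical
    obtain ⟨ι, _i, j, f, g, hcard, hind, hsum⟩ := hT
    letI := _i
    set grp0 : Finset ι := univ.filter (fun s => j s = 0) with hgrp0
    set m0 : ℕ := #grp0 with hm0
    -- the pairing map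
    let Φ : (↥A → K) →ₗ[K] (↥grp0 → K) :=
      { toFun := fun h s => ∑ a : ↥A, h a * f s.1 a.1
        map_add' := by
          intro h h'; funext s
          simp [add_mul, Finset.sum_add_distrib]
        map_smul' := by
          intro c h; funext s
          simp [Finset.mul_sum, mul_assoc] }
    have hker : A.card ≤ m0 + Module.finrank K ↥(LinearMap.ker Φ) := by
      have h1 := LinearMap.finrank_range_add_finrank_ker Φ
      rw [Module.finrank_pi, Fintype.card_coe] at h1
      have h2 : Module.finrank K ↥(LinearMap.range Φ) ≤ m0 := by
        have := Submodule.finrank_le (LinearMap.range Φ)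
        rwa [Module.finrank_pi, Fintype.card_coe] at this
      omega
    obtain ⟨h0, hh0ker, hh0supp⟩ := exists_mem_finrank_le_support (LinearMap.ker Φ)
    -- extension of h0 to σ
    set hh : σ → K := fun v => if hv : v ∈ A then h0 ⟨v, hv⟩ else 0 with hhh
    set A' : Finset σ := A.filter (fun v => hh v ≠ 0) with hA'
    have hA'sub : A' ⊆ A := Finset.filter_subset _ _
    have hA'card : #(univ.filter fun a : ↥A => h0 a ≠ 0) = #A' := by
      refine Finset.card_bij (fun a _ => a.1) ?_ ?_ ?_
      · intro a ha
        simp only [mem_filter, mem_univ, true_and] at ha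
        simp only [hA', mem_filter]
        exact ⟨a.2, by simp [hhh, a.2, ha]⟩
      · intro a _ b _ hab; exact Subtype.ext hab
      · intro b hb
        simp only [hA', mem_filter] at hb
        refine ⟨⟨b, hb.1⟩, ?_, rfl⟩
        simp only [mem_filter, mem_univ, true_and]
        have := hb.2
        simpa [hhh, hb.1] using this
    -- the contracted tensor
    set T' : (Fin (k + 2) → σ) → K := fun x => ∑ v : σ, hh v * T (Fin.cons v x) with hT'
    have hhA : ∀ v : σ, hh v ≠ 0 → v ∈ A := by
      intro v hv
      by_contra hc
      simp [hhh, hc] at hv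
    -- key sum transfer
    have htransfer : ∀ w : σ → K, ∑ v : σ, hh v * w v = ∑ a : ↥A, h0 a * w a.1 := by
      intro w
      rw [← Finset.sum_subset (Finset.subset_univ A) (by
        intro v _ hv
        have : hh v = 0 := by simp [hhh, hv]
        rw [this, zero_mul])]
      rw [← Finset.sum_coe_sort A (fun v => hh v * w v)]
      refine Finset.sum_congr rfl fun a _ => ?_
      simp [hhh, a.2]
    -- diagonal values of T'
    have hdiag' : ∀ a ∈ A', T' (fun _ => a) ≠ 0 := by
      intro a ha
      have haA : a ∈ A := hA'sub ha
      have hha : hh a ≠ 0 := (Finset.mem_filter.1 ha).2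
      have hconst : (Fin.cons a (fun _ => a) : Fin (k + 3) → σ) = fun _ => a := by
        funext i
        refine Fin.cases ?_ ?_ i <;> simp
      show (∑ v : σ, hh v * T (Fin.cons v (fun _ => a))) ≠ 0
      rw [Finset.sum_eq_single a ?_ (by simp)]
      · rw [hconst]; exact mul_ne_zero hha (hdiag a haA)
      · intro v _ hva
        by_cases hv : hh v = 0
        · rw [hv, zero_mul]
        · have hvA : v ∈ A := hhA v hv
          have : T (Fin.cons v (fun _ => a)) = 0 := by
            apply hoff
            · intro i
              refine Fin.cases ?_ ?_ i
              · simpa using hvA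
              · intro i'; simpa using haA
            · intro hc
              have := hc 0 1
              simp only [Fin.cons_zero] at this
              rw [show (1 : Fin (k + 3)) = Fin.succ 0 by rfl, Fin.cons_succ] at this
              exact hva this
          rw [this, mul_zero]
    -- off-diagonal values of T'
    have hoff' : ∀ x : Fin (k + 2) → σ, (∀ i, x i ∈ A') → ¬(∀ i i', x i = x i') → T' x = 0 := by
      intro x hx hnc
      show (∑ v : σ, hh v * T (Fin.cons v x)) = 0
      refine Finset.sum_eq_zero fun v _ => ?_
      by_cases hv : hh v = 0
      · rw [hv, zero_mul]
      · have hvA : v ∈ A := hhA v hv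
        have : T (Fin.cons v x) = 0 := by
          apply hoff
          · intro i
            refine Fin.cases ?_ ?_ i
            · simpa using hvA
            · intro i'; simpa using hA'sub (hx i')
          · intro hc
            apply hnc
            intro i i'
            have := hc i.succ i'.succ
            simpa using this
        rw [this, mul_zero]
    -- slice decomposition of T'
    have hT'slices : SlicesLE (k + 2) T' (Fintype.card ι - m0) := by
      refine ⟨{s : ι // ¬ j s = 0}, inferInstance,
        fun s => (j s.1).pred s.2, fun s => f s.1,
        fun s x => ∑ v : σ, hh v * g s.1 (Fin.cons v x), ?_, ?_, ?_⟩
      · rw [Fintype.card_subtype_compl]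
        have : Fintype.card {s : ι // j s = 0} = m0 := by
          rw [hm0, hgrp0]; exact Fintype.card_subtype _
        omega
      · intro s x y hxy
        refine Finset.sum_congr rfl fun v _ => ?_
        congr 1
        apply hind s.1
        intro i hi
        rcases Fin.eq_zero_or_eq_succ i with rfl | ⟨t, rfl⟩
        · simp
        · simp only [Fin.cons_succ]
          apply hxy
          intro hc
          exact hi (by rw [hc, Fin.succ_pred])
      · intro x
        show (∑ v : σ, hh v * T (Fin.cons v x)) = _
        have step1 : ∑ v : σ, hh v * T (Fin.cons v x)
            = ∑ s : ι, ∑ v : σ, hh v * (f s ((Fin.cons v x : Fin (k + 1 + 2) → σ) (j s)) * g s (Fin.cons v x)) := by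
          rw [Finset.sum_comm]
          refine Finset.sum_congr rfl fun v _ => ?_
          rw [hsum (Fin.cons v x), Finset.mul_sum]
        rw [step1]
        rw [← Finset.sum_filter_add_sum_filter_not univ (fun s => j s = 0)]
        have hzero : ∑ s ∈ univ.filter (fun s => j s = 0),
            ∑ v : σ, hh v * (f s ((Fin.cons v x : Fin (k + 1 + 2) → σ) (j s)) * g s (Fin.cons v x)) = 0 := by
          refine Finset.sum_eq_zero fun s hs => ?_
          have hjs : j s = 0 := (Finset.mem_filter.1 hs).2
          have hgc : ∀ v : σ, g s (Fin.cons v x) = g s (Fin.cons (x 0) x) := by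
            intro v
            apply hind s
            intro i hi
            rcases Fin.eq_zero_or_eq_succ i with rfl | ⟨t, rfl⟩
            · exact absurd hjs.symm hi
            · simp
          have : ∀ v : σ, hh v * (f s ((Fin.cons v x : Fin (k + 1 + 2) → σ) (j s)) * g s (Fin.cons v x))
              = (hh v * f s v) * g s (Fin.cons (x 0) x) := by
            intro v
            simp only [hjs, Fin.cons_zero, hgc v, mul_assoc]
          rw [Finset.sum_congr rfl fun v _ => this v, ← Finset.sum_mul]
          have hker0 : ∑ v : σ, hh v * f s v = 0 := by
            rw [htransfer (f s)]
            have := congrFun (LinearMap.mem_ker.1 hh0ker) ⟨s, hs⟩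
            exact this
          rw [hker0, zero_mul]
        rw [hzero, zero_add]
        refine Finset.sum_bij' (fun s hs => (⟨s, (Finset.mem_filter.1 hs).2⟩ : {s : ι // ¬ j s = 0}))
          (fun s _ => s.1) (fun s hs => Finset.mem_univ _)
          (fun s _ => by simpa using s.2) (fun s hs => rfl) (fun s _ => rfl) ?_
        intro s hs
        have hjsne : ¬ j s = 0 := (Finset.mem_filter.1 hs).2
        rw [Finset.mul_sum]
        refine Finset.sum_congr rfl fun v _ => ?_
        have hcons : (Fin.cons v x : Fin (k + 1 + 2) → σ) (j s) = x ((j s).pred hjsne) := by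
          conv_lhs => rw [← Fin.succ_pred (j s) hjsne]
          rw [Fin.cons_succ]
        rw [hcons]
        ring
    -- apply induction hypothesis
    have hind' := ih T' A' (Fintype.card ι - m0) hdiag' hoff' hT'slices
    have hm0le : m0 ≤ Fintype.card ι := by
      rw [hm0]; exact le_trans (Finset.card_filter_le _ _) (by simp)
    have hsupp : Module.finrank K ↥(LinearMap.ker Φ) ≤ #A' := by
      rw [← hA'card]; exact hh0supp
    calc #A ≤ m0 + Module.finrank K ↥(LinearMap.ker Φ) := hker
      _ ≤ m0 + #A' := Nat.add_le_add_left hsupp _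
      _ ≤ m0 + (Fintype.card ι - m0) := Nat.add_le_add_left hind' _
      _ = Fintype.card ι := Nat.add_sub_cancel' hm0le
      _ ≤ r := hcard

section Construction

variable (p n : ℕ) [hpf : Fact p.Prime]

/-- fiber count of an assignment. -/
def cnt (S : Finset (Fin n)) (G : ↥S × Fin (p - 1) → Fin p) (j : Fin p) : ℕ :=
  #(univ.filter fun c => G c = j)

/-- the degree bound. -/
def dd : ℕ := n * (p - 1) / p

lemma exists_cnt_le (S : Finset (Fin n)) (G : ↥S × Fin (p - 1) → Fin p) :
    ∃ j, cnt p n S G j ≤ dd p n := by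
  by_contra hcon
  push_neg at hcon
  have htot : ∑ j : Fin p, cnt p n S G j = #S * (p - 1) := by
    have h1 := (Finset.card_eq_sum_card_fiberwise
      (f := G) (s := univ) (t := univ) (fun c _ => mem_univ _)).symm
    simpa [cnt, Fintype.card_coe] using h1
  have h1 : p * (dd p n + 1) ≤ ∑ j : Fin p, cnt p n S G j := by
    calc p * (dd p n + 1) = ∑ _j : Fin p, (dd p n + 1) := by
          simp [Finset.sum_const, mul_comm]
      _ ≤ _ := Finset.sum_le_sum fun j _ => hcon j
  have h2 : #S * (p - 1) ≤ n * (p - 1) := by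
    have : #S ≤ n := by simpa using Finset.card_le_univ S
    exact Nat.mul_le_mul_right _ this
  have hp0 : 0 < p := hpf.out.pos
  have h3 := Nat.div_add_mod (n * (p - 1)) p
  have h4 := Nat.mod_lt (n * (p - 1)) hp0
  have h5 : p * (dd p n + 1) = p * (n * (p - 1) / p) + p := by
    rw [dd]; ring
  omega

/-- chosen low-degree coordinate block. -/
noncomputable def jsel (S : Finset (Fin n)) (G : ↥S × Fin (p - 1) → Fin p) : Fin p :=
  (exists_cnt_le p n S G).choose

lemma jsel_spec (S : Finset (Fin n)) (G : ↥S × Fin (p - 1) → Fin p) :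
    cnt p n S G (jsel p n S G) ≤ dd p n :=
  (exists_cnt_le p n S G).choose_spec

/-- exponent of variable `i` in the chosen block. -/
noncomputable def expcnt (S : Finset (Fin n)) (G : ↥S × Fin (p - 1) → Fin p) (i : Fin n) : ℕ :=
  #(univ.filter fun c => G c = jsel p n S G ∧ c.1.1 = i)

lemma expcnt_lt (S : Finset (Fin n)) (G : ↥S × Fin (p - 1) → Fin p) (i : Fin n) :
    expcnt p n S G i < p := by
  have h1 : expcnt p n S G i ≤ p - 1 := by
    have := Finset.card_le_card_of_injOn (f := fun c : ↥S × Fin (p - 1) => c.2)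
      (s := univ.filter fun c => G c = jsel p n S G ∧ c.1.1 = i) (t := univ)
      (fun c _ => mem_univ _) ?_
    · simpa [expcnt] using this
    · intro c hc c' hc' h2
      simp only [Finset.coe_filter, Set.mem_setOf_eq] at hc hc'
      have : c.1 = c'.1 := Subtype.ext (hc.2.2.trans hc'.2.2.symm)
      exact Prod.ext this h2
  have := hpf.out.two_le
  omega

lemma expcnt_sum (S : Finset (Fin n)) (G : ↥S × Fin (p - 1) → Fin p) :
    ∑ i : Fin n, expcnt p n S G i = cnt p n S G (jsel p n S G) := by
  rw [cnt, Finset.card_eq_sum_card_fiberwise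
    (f := fun c : ↥S × Fin (p - 1) => c.1.1) (t := univ) (fun c _ => mem_univ _)]
  refine Finset.sum_congr rfl fun i _ => ?_
  rw [expcnt, Finset.filter_filter]

/-- exponent vector of the chosen block. -/
noncomputable def expv (S : Finset (Fin n)) (G : ↥S × Fin (p - 1) → Fin p) : Fin n → Fin p :=
  fun i => ⟨expcnt p n S G i, expcnt_lt p n S G i⟩

/-- the set of admissible exponent vectors. -/
def ESet : Finset (Fin n → Fin p) := univ.filter (fun e => ∑ i, (e i : ℕ) ≤ dd p n)

lemma expv_mem (S : Finset (Fin n)) (G : ↥S × Fin (p - 1) → Fin p) :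
    expv p n S G ∈ ESet p n := by
  rw [ESet, Finset.mem_filter]
  refine ⟨mem_univ _, ?_⟩
  have : ∑ i : Fin n, ((expv p n S G i : ℕ)) = ∑ i : Fin n, expcnt p n S G i := rfl
  rw [this, expcnt_sum]
  exact jsel_spec p n S G

/-- monomial function. -/
def monFn (e : Fin n → Fin p) : (Fin n → ZMod p) → ZMod p := fun v => ∏ i, v i ^ (e i : ℕ)

/-- the zero-sum counting tensor. -/
def TT : (Fin p → (Fin n → ZMod p)) → ZMod p :=
  fun x => ∏ i : Fin n, (1 - (∑ j, x j i) ^ (p - 1))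

lemma TT_diag (a : Fin n → ZMod p) : TT p n (fun _ => a) = 1 := by
  rw [TT]
  have hp2 := hpf.out.two_le
  have hfac : ∀ i : Fin n, (1 : ZMod p) - (∑ _j : Fin p, a i) ^ (p - 1) = 1 := by
    intro i
    have h0 : (∑ _j : Fin p, a i) = 0 := by
      rw [Finset.sum_const, Finset.card_univ, Fintype.card_fin, nsmul_eq_mul,
        ZMod.natCast_self, zero_mul]
    rw [h0, zero_pow (by omega), sub_zero]
  rw [Finset.prod_congr rfl fun i _ => hfac i, Finset.prod_const_one]

lemma TT_eq_zero {x : Fin p → (Fin n → ZMod p)} (hx : (∑ j, x j) ≠ 0) : TT p n x = 0 := by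
  obtain ⟨i, hi⟩ := Function.ne_iff.1 hx
  have hi' : (∑ j, x j i) ≠ 0 := by
    have : (∑ j, x j) i = ∑ j, x j i := by simp
    rw [← this]; simpa using hi
  refine Finset.prod_eq_zero (mem_univ i) ?_
  rw [ZMod.pow_card_sub_one_eq_one hi', sub_self]

set_option maxHeartbeats 1600000 in
lemma TT_slices : SlicesLE p (TT p n) (p * #(ESet p n)) := by
  classical
  refine ⟨Fin p × ↥(ESet p n), inferInstance, fun s => s.1,
    fun s => monFn p n s.2.1,
    fun s x => ∑ S ∈ (univ : Finset (Fin n)).powerset,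
      ∑ G : ↥S × Fin (p - 1) → Fin p,
        if jsel p n S G = s.1 ∧ expv p n S G = s.2.1 then
          (-1 : ZMod p) ^ #S * ∏ c ∈ univ.filter (fun c => ¬ G c = s.1), x (G c) c.1.1
        else 0, ?_, ?_, ?_⟩
  · rw [Fintype.card_prod, Fintype.card_fin, Fintype.card_coe]
  · intro s x y hxy
    refine Finset.sum_congr rfl fun S _ => Finset.sum_congr rfl fun G _ => ?_
    by_cases hcond : jsel p n S G = s.1 ∧ expv p n S G = s.2.1
    · rw [if_pos hcond, if_pos hcond]
      congr 1
      refine Finset.prod_congr rfl fun c hc => ?_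
      have hne : ¬ G c = s.1 := (Finset.mem_filter.1 hc).2
      rw [hxy (G c) hne]
    · rw [if_neg hcond, if_neg hcond]
  · intro x
    have stepB : ∀ S : Finset (Fin n), ∏ i ∈ S, (∑ j, x j i) ^ (p - 1)
        = ∑ G : ↥S × Fin (p - 1) → Fin p, ∏ c : ↥S × Fin (p - 1), x (G c) c.1.1 := by
      intro S
      calc ∏ i ∈ S, (∑ j, x j i) ^ (p - 1)
          = ∏ i : ↥S, (∑ j, x j i.1) ^ (p - 1) := (Finset.prod_coe_sort S _).symm
        _ = ∏ i : ↥S, ∏ _t : Fin (p - 1), (∑ j, x j i.1) := by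
            refine Finset.prod_congr rfl fun i _ => ?_
            rw [Finset.prod_const, Finset.card_univ, Fintype.card_fin]
        _ = ∏ c : ↥S × Fin (p - 1), ∑ j, x j c.1.1 :=
            (Fintype.prod_prod_type (f := fun c : ↥S × Fin (p - 1) => ∑ j, x j c.1.1)).symm
        _ = ∑ G ∈ Fintype.piFinset (fun _ : ↥S × Fin (p - 1) => (univ : Finset (Fin p))),
              ∏ c : ↥S × Fin (p - 1), x (G c) c.1.1 := Finset.prod_univ_sum _ _
        _ = ∑ G : ↥S × Fin (p - 1) → Fin p, ∏ c : ↥S × Fin (p - 1), x (G c) c.1.1 := by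
            rw [Fintype.piFinset_univ]
    have stepA : TT p n x = ∑ S ∈ (univ : Finset (Fin n)).powerset,
        (-1 : ZMod p) ^ #S * ∏ i ∈ S, (∑ j, x j i) ^ (p - 1) := by
      calc TT p n x
          = ∏ i ∈ univ, ((fun i => -((∑ j, x j i) ^ (p - 1))) i + (fun _ => (1 : ZMod p)) i) := by
            refine Finset.prod_congr rfl fun i _ => ?_
            show (1 : ZMod p) - (∑ j, x j i) ^ (p - 1) = _
            ring
        _ = ∑ S ∈ univ.powerset, (∏ i ∈ S, -((∑ j, x j i) ^ (p - 1)))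
              * ∏ _i ∈ univ \ S, (1 : ZMod p) := Finset.prod_add _ _ _
        _ = ∑ S ∈ univ.powerset, (-1 : ZMod p) ^ #S * ∏ i ∈ S, (∑ j, x j i) ^ (p - 1) := by
            refine Finset.sum_congr rfl fun S _ => ?_
            rw [Finset.prod_const_one, mul_one]
            calc ∏ i ∈ S, -((∑ j, x j i) ^ (p - 1))
                = ∏ i ∈ S, ((-1 : ZMod p) * (∑ j, x j i) ^ (p - 1)) := by
                  refine Finset.prod_congr rfl fun i _ => by ring
              _ = (∏ _i ∈ S, (-1 : ZMod p)) * ∏ i ∈ S, (∑ j, x j i) ^ (p - 1) :=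
                  Finset.prod_mul_distrib
              _ = (-1 : ZMod p) ^ #S * ∏ i ∈ S, (∑ j, x j i) ^ (p - 1) := by
                  rw [Finset.prod_const]
    have stepC : ∀ (S : Finset (Fin n)) (G : ↥S × Fin (p - 1) → Fin p),
        ∏ c : ↥S × Fin (p - 1), x (G c) c.1.1
          = monFn p n (expv p n S G) (x (jsel p n S G))
            * ∏ c ∈ univ.filter (fun c => ¬ G c = jsel p n S G), x (G c) c.1.1 := by
      intro S G
      rw [← Finset.prod_filter_mul_prod_filter_not univ (fun c => G c = jsel p n S G)
        (fun c => x (G c) c.1.1)]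
      congr 1
      have h1 : ∏ c ∈ univ.filter (fun c => G c = jsel p n S G), x (G c) c.1.1
          = ∏ c ∈ univ.filter (fun c => G c = jsel p n S G), x (jsel p n S G) c.1.1 :=
        Finset.prod_congr rfl fun c hc => by rw [(Finset.mem_filter.1 hc).2]
      rw [h1, ← Finset.prod_fiberwise_of_maps_to
        (g := fun c : ↥S × Fin (p - 1) => c.1.1) (t := univ)
        (fun c _ => mem_univ _) (fun c => x (jsel p n S G) c.1.1)]
      show _ = ∏ i : Fin n, x (jsel p n S G) i ^ ((expv p n S G i : ℕ))
      refine Finset.prod_congr rfl fun i _ => ?_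
      have h2 : ∀ c ∈ (univ.filter (fun c : ↥S × Fin (p - 1) => G c = jsel p n S G)).filter
          (fun c => c.1.1 = i), x (jsel p n S G) c.1.1 = x (jsel p n S G) i := by
        intro c hc
        rw [(Finset.mem_filter.1 hc).2]
      rw [Finset.prod_congr rfl h2, Finset.prod_const, Finset.filter_filter]
      rfl
    -- assemble
    classical
    let Q : (S : Finset (Fin n)) → ((↥S × Fin (p - 1)) → Fin p) → (Fin p × ↥(ESet p n)) → ZMod p :=
      fun S G s =>
        if jsel p n S G = s.1 ∧ expv p n S G = s.2.1 then
          monFn p n s.2.1 (x s.1) *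
            ((-1 : ZMod p) ^ #S * ∏ c ∈ univ.filter (fun c => ¬ G c = s.1), x (G c) c.1.1)
        else 0
    have hrhs : ∀ s : Fin p × ↥(ESet p n),
        monFn p n s.2.1 (x s.1) * (∑ S ∈ (univ : Finset (Fin n)).powerset,
          ∑ G : ↥S × Fin (p - 1) → Fin p,
            if jsel p n S G = s.1 ∧ expv p n S G = s.2.1 then
              (-1 : ZMod p) ^ #S * ∏ c ∈ univ.filter (fun c => ¬ G c = s.1), x (G c) c.1.1
            else 0)
        = ∑ S ∈ (univ : Finset (Fin n)).powerset, ∑ G : ↥S × Fin (p - 1) → Fin p, Q S G s := by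
      intro s
      rw [Finset.mul_sum]
      refine Finset.sum_congr rfl fun S _ => ?_
      rw [Finset.mul_sum]
      refine Finset.sum_congr rfl fun G _ => ?_
      rw [mul_ite, mul_zero]
    refine Eq.symm ?_
    calc ∑ s : Fin p × ↥(ESet p n),
          monFn p n s.2.1 (x s.1) * (∑ S ∈ (univ : Finset (Fin n)).powerset,
            ∑ G : ↥S × Fin (p - 1) → Fin p,
              if jsel p n S G = s.1 ∧ expv p n S G = s.2.1 then
                (-1 : ZMod p) ^ #S * ∏ c ∈ univ.filter (fun c => ¬ G c = s.1), x (G c) c.1.1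
              else 0)
        = ∑ s : Fin p × ↥(ESet p n), ∑ S ∈ (univ : Finset (Fin n)).powerset,
            ∑ G : ↥S × Fin (p - 1) → Fin p, Q S G s := Finset.sum_congr rfl fun s _ => hrhs s
      _ = ∑ S ∈ (univ : Finset (Fin n)).powerset, ∑ s : Fin p × ↥(ESet p n),
            ∑ G : ↥S × Fin (p - 1) → Fin p, Q S G s := Finset.sum_comm
      _ = ∑ S ∈ (univ : Finset (Fin n)).powerset, ∑ G : ↥S × Fin (p - 1) → Fin p,
            ∑ s : Fin p × ↥(ESet p n), Q S G s :=
          Finset.sum_congr rfl fun S _ => Finset.sum_comm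
      _ = ∑ S ∈ (univ : Finset (Fin n)).powerset, ∑ G : ↥S × Fin (p - 1) → Fin p,
            (-1 : ZMod p) ^ #S * ∏ c : ↥S × Fin (p - 1), x (G c) c.1.1 := by
          refine Finset.sum_congr rfl fun S _ => Finset.sum_congr rfl fun G _ => ?_
          rw [Finset.sum_eq_single
            ((jsel p n S G, ⟨expv p n S G, expv_mem p n S G⟩) : Fin p × ↥(ESet p n))]
          · simp only [Q, eq_self_iff_true, and_self, if_true, ite_true]
            rw [stepC S G]
            ring
          · intro s _ hne
            simp only [Q]
            rw [if_neg]
            intro hcond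
            exact hne (Prod.ext hcond.1.symm (Subtype.ext hcond.2.symm))
          · intro hn
            exact absurd (mem_univ _) hn
      _ = ∑ S ∈ (univ : Finset (Fin n)).powerset,
            (-1 : ZMod p) ^ #S * ∏ i ∈ S, (∑ j, x j i) ^ (p - 1) := by
          refine Finset.sum_congr rfl fun S _ => ?_
          rw [stepB S, Finset.mul_sum]
      _ = TT p n x := stepA.symm

/-- partial-sum encoding of an exponent vector. -/
def psum (e : Fin n → Fin p) (i : Fin n) : ℕ :=
  (∑ k ∈ univ.filter (fun k => k ≤ i), (e k : ℕ)) + i.val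

omit hpf in
lemma psum_strictMono (e : Fin n → Fin p) : StrictMono (psum p n e) := by
  intro i i' hii
  have hsub : univ.filter (fun k => k ≤ i) ⊆ univ.filter (fun k => k ≤ i') := by
    intro k hk
    simp only [mem_filter, mem_univ, true_and] at hk ⊢
    exact le_trans hk hii.le
  have hle : (∑ k ∈ univ.filter (fun k => k ≤ i), ((e k : ℕ)))
      ≤ ∑ k ∈ univ.filter (fun k => k ≤ i'), ((e k : ℕ)) :=
    Finset.sum_le_sum_of_subset hsub
  have hval : i.val < i'.val := hii
  rw [psum, psum]
  omega

omit hpf in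
lemma psum_lt {e : Fin n → Fin p} (he : e ∈ ESet p n) (i : Fin n) :
    psum p n e i < dd p n + n := by
  have h1 : (∑ k ∈ univ.filter (fun k => k ≤ i), (e k : ℕ)) ≤ ∑ k : Fin n, (e k : ℕ) :=
    Finset.sum_le_sum_of_subset (Finset.filter_subset _ _)
  have h2 : ∑ k : Fin n, (e k : ℕ) ≤ dd p n := (Finset.mem_filter.1 he).2
  have h3 : i.val < n := i.isLt
  rw [psum]
  omega

omit hpf in
lemma psum_inj {e e' : Fin n → Fin p} (hpq : ∀ i, psum p n e i = psum p n e' i) : e = e' := by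
  classical
  have key : ∀ m : ℕ, ∀ i : Fin n, i.val < m → e i = e' i := by
    intro m
    induction m with
    | zero => intro i h; omega
    | succ m ih =>
      intro i him
      have hsplit : univ.filter (fun k => k ≤ i) = insert i (univ.filter (fun k => k < i)) := by
        ext k
        simp only [mem_filter, mem_univ, true_and, Finset.mem_insert]
        rw [le_iff_lt_or_eq]
        tauto
      have hnotmem : i ∉ univ.filter (fun k => k < i) := by simp
      have he : ∑ k ∈ univ.filter (fun k => k ≤ i), ((e k : ℕ))
          = (e i : ℕ) + ∑ k ∈ univ.filter (fun k => k < i), (e k : ℕ) := by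
        rw [hsplit, Finset.sum_insert hnotmem]
      have he' : ∑ k ∈ univ.filter (fun k => k ≤ i), ((e' k : ℕ))
          = (e' i : ℕ) + ∑ k ∈ univ.filter (fun k => k < i), (e' k : ℕ) := by
        rw [hsplit, Finset.sum_insert hnotmem]
      have hlow : ∑ k ∈ univ.filter (fun k => k < i), ((e k : ℕ))
          = ∑ k ∈ univ.filter (fun k => k < i), (e' k : ℕ) := by
        refine Finset.sum_congr rfl fun k hk => ?_
        have hki : k < i := (Finset.mem_filter.1 hk).2
        have : k.val < i.val := hki
        rw [ih k (by omega)]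
      have hpi := hpq i
      rw [psum, psum, he, he', hlow] at hpi
      have : (e i : ℕ) = (e' i : ℕ) := by omega
      exact Fin.ext this
  exact funext fun i => key (i.val + 1) i (by omega)

omit hpf in
lemma ESet_card_le : #(ESet p n) ≤ (dd p n + n).choose n := by
  classical
  have hmap : ∀ e ∈ ESet p n, Finset.image (fun i => psum p n e i) univ
      ∈ Finset.powersetCard n (Finset.range (dd p n + n)) := by
    intro e he
    rw [Finset.mem_powersetCard]
    constructor
    · intro m hm
      rw [Finset.mem_image] at hm
      obtain ⟨i, _, rfl⟩ := hm
      exact Finset.mem_range.2 (psum_lt p n he i)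
    · rw [Finset.card_image_of_injOn ((psum_strictMono p n e).injective.injOn)]
      simp
  have hinj : Set.InjOn (fun e => Finset.image (fun i => psum p n e i) univ) (ESet p n) := by
    intro e he e' he' hee
    simp only at hee
    apply psum_inj p n
    intro i
    have hcard : #(Finset.image (fun i => psum p n e i) univ) = n := by
      rw [Finset.card_image_of_injOn ((psum_strictMono p n e).injective.injOn)]
      simp
    let f : Fin n ↪o ℕ := OrderEmbedding.ofStrictMono _ (psum_strictMono p n e)
    let f' : Fin n ↪o ℕ := OrderEmbedding.ofStrictMono _ (psum_strictMono p n e')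
    have h1 : f = (Finset.image (fun i => psum p n e i) univ).orderEmbOfFin hcard :=
      Finset.orderEmbOfFin_unique' hcard fun x => Finset.mem_image_of_mem _ (mem_univ x)
    have h2 : f' = (Finset.image (fun i => psum p n e i) univ).orderEmbOfFin hcard := by
      refine Finset.orderEmbOfFin_unique' hcard fun x => ?_
      rw [hee]
      exact Finset.mem_image_of_mem _ (mem_univ x)
    have := congrFun (congrArg (fun (F : Fin n ↪o ℕ) => (F : Fin n → ℕ)) (h1.trans h2.symm)) i
    exact this
  have := Finset.card_le_card_of_injOn _ hmap hinj
  rwa [Finset.card_powersetCard, Finset.card_range] at this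

end Construction

/-- Slice rank bound: if `A ⊆ (ℤ/pℤ)^n` contains no `p` elements (with repetition allowed, but
not all equal) summing to zero, then `|A| ≤ p·C(⌊n(2p-1)/p⌋, n)`. -/
theorem slice_rank_bound (p n : ℕ) (hp : p.Prime) (hn : 1 ≤ n)
    (A : Finset (Fin n → ZMod p))
    (hA : ∀ v : Fin p → (Fin n → ZMod p), (∀ i, v i ∈ A) → (∑ i, v i) = 0 →
      ∀ i j, v i = v j) :
    A.card ≤ p * Nat.choose (n * (2 * p - 1) / p) n := by
  haveI : Fact p.Prime := ⟨hp⟩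
  have hp2 := hp.two_le
  obtain ⟨k, rfl⟩ : ∃ k, p = k + 2 := ⟨p - 2, by omega⟩
  haveI : Fact (1 < k + 2) := ⟨by omega⟩
  have h1 : #A ≤ (k + 2) * #(ESet (k + 2) n) := by
    refine tao_diag k (TT (k + 2) n) A ((k + 2) * #(ESet (k + 2) n)) ?_ ?_ ?_
    · intro a _
      rw [TT_diag]
      exact one_ne_zero
    · intro x hx hnc
      refine TT_eq_zero (k + 2) n ?_
      intro hs
      exact hnc fun i i' => hA x hx hs i i'
    · exact TT_slices (k + 2) n
  have h2 : #(ESet (k + 2) n) ≤ (dd (k + 2) n + n).choose n := ESet_card_le (k + 2) n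
  have h3 : n * (2 * (k + 2) - 1) / (k + 2) = dd (k + 2) n + n := by
    have e1 : n * (2 * (k + 2) - 1) = n * ((k + 2) - 1) + n * (k + 2) := by
      have e0 : 2 * (k + 2) - 1 = ((k + 2) - 1) + (k + 2) := by omega
      rw [e0, Nat.mul_add]
    rw [e1, dd, Nat.add_mul_div_right _ _ (by omega : 0 < k + 2)]
  rw [h3]
  calc #A ≤ (k + 2) * #(ESet (k + 2) n) := h1
    _ ≤ (k + 2) * ((dd (k + 2) n + n).choose n) := Nat.mul_le_mul_left _ h2
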